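/- For M ∈ ℂ^{d×d} with rows m_1,...,m_d, and y ∈ ℂ^{L_n} labeled by multi-indices of order n, the symmetric Kronecker product satisfies (S_n(M) y)_k = (1/√(k!)) Σ_{|α_1|=k_1} ··· Σ_{|α_d|=k_d} binom(k_1,α_1)···binom(k_d,α_d) · m_1^{α_1}···m_d^{α_d} · √((α_1+···+α_d)!) · y_{α_1+···+α_d}, for every k ∈ ℕ^d with |k| = n. -/

import Mathlib

open Matrix

/-- The entry-count multi-index of a tuple `j ∈ {1,...,d}^n`. -/
def cnt {n d : ℕ} (j : Fin n → Fin d) (m : Fin d) : ℕ :=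
  (Finset.univ.filter fun t => j t = m).card

/-- The normalized indicator vector `p_k` of the class of tuples with entry counts `k`. -/
noncomputable def pvec (d n : ℕ) (k : Fin d → ℕ) : (Fin n → Fin d) → ℂ :=
  fun j => if cnt j = k then
    ((Real.sqrt ((Finset.univ.filter fun j' : Fin n → Fin d => cnt j' = k).card) : ℝ) : ℂ)⁻¹
  else 0

/-- The `L_n × d^n` matrix `P_n` whose rows are the orthonormal vectors `p_i`. -/
noncomputable def Pmat (d n : ℕ) :
    Matrix ↥(Finset.Nat.antidiagonalTuple d n) (Fin n → Fin d) ℂ :=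
  Matrix.of fun i j => pvec d n i.1 j

/-- The `n`-fold Kronecker product `M^{⊗n}` of `M` with itself, as a
`d^n × d^n` matrix indexed by tuples. -/
def kronPow (d n : ℕ) (M : Matrix (Fin d) (Fin d) ℂ) :
    Matrix (Fin n → Fin d) (Fin n → Fin d) ℂ :=
  Matrix.of fun i j => ∏ t, M (i t) (j t)

/-- The `n`-fold symmetric Kronecker product `S_n(M) = P_n M^{⊗n} P_n*`. -/
noncomputable def symKron (d n : ℕ) (M : Matrix (Fin d) (Fin d) ℂ) :
    Matrix ↥(Finset.Nat.antidiagonalTuple d n) ↥(Finset.Nat.antidiagonalTuple d n) ℂ :=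
  Pmat d n * kronPow d n M * (Pmat d n)ᴴ

lemma prod_cnt {A : Type*} [CommMonoid A] {n d : ℕ} (g : Fin d → A) (j : Fin n → Fin d) :
    ∏ t, g (j t) = ∏ m, g m ^ cnt j m := by
  rw [← Finset.prod_fiberwise Finset.univ j (fun t => g (j t))]
  refine Finset.prod_congr rfl fun m _ => ?_
  rw [Finset.prod_congr rfl (fun t ht => by rw [(Finset.mem_filter.mp ht).2]),
    Finset.prod_const]
  rfl

lemma mono_eq {d : ℕ} (w : ℂ) (e : Fin d → ℕ) :
    MvPolynomial.C w * ∏ r, (MvPolynomial.X r : MvPolynomial (Fin d) ℂ) ^ e r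
      = MvPolynomial.monomial (Finsupp.equivFunOnFinite.symm e) w := by
  have h1 : ∏ r, (MvPolynomial.X r : MvPolynomial (Fin d) ℂ) ^ e r
      = ∏ r ∈ (Finsupp.equivFunOnFinite.symm e).support,
          (MvPolynomial.X r : MvPolynomial (Fin d) ℂ) ^ (Finsupp.equivFunOnFinite.symm e) r := by
    refine (Finset.prod_subset (Finset.subset_univ _) fun x _ hx => ?_).symm
    have : e x = 0 := by simpa [Finsupp.notMem_support_iff] using hx
    simp [Finsupp.coe_equivFunOnFinite_symm, this]
  rw [h1, MvPolynomial.prod_X_pow_eq_monomial, MvPolynomial.C_mul_monomial, mul_one]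

lemma coeff_compare {d : ℕ} {ι ι' : Type*} [DecidableEq ι] [DecidableEq ι']
    (s : Finset ι) (t : Finset ι')
    (w : ι → ℂ) (e : ι → Fin d → ℕ) (w' : ι' → ℂ) (e' : ι' → Fin d → ℕ)
    (h : ∑ i ∈ s, MvPolynomial.C (w i) * ∏ r, (MvPolynomial.X r : MvPolynomial (Fin d) ℂ) ^ e i r
       = ∑ i ∈ t, MvPolynomial.C (w' i) * ∏ r, (MvPolynomial.X r : MvPolynomial (Fin d) ℂ) ^ e' i r)
    (c : Fin d → ℕ) :
    ∑ i ∈ s.filter (fun i => e i = c), w i = ∑ i ∈ t.filter (fun i => e' i = c), w' i := by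
  have h2 := congrArg (MvPolynomial.coeff (Finsupp.equivFunOnFinite.symm c)) h
  simp only [mono_eq, MvPolynomial.coeff_sum, MvPolynomial.coeff_monomial,
    EmbeddingLike.apply_eq_iff_eq] at h2
  rw [Finset.sum_filter, Finset.sum_filter]
  exact h2

lemma antidiag_eq (d m : ℕ) :
    Finset.Nat.antidiagonalTuple d m = Finset.piAntidiag Finset.univ m := by
  ext f
  simp [Finset.Nat.mem_antidiagonalTuple, Finset.mem_piAntidiag]

lemma count_eq {n d : ℕ} (c : Fin d → ℕ) (hc : ∑ r, c r = n) :
    (Finset.univ.filter fun j' : Fin n → Fin d => cnt j' = c).card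
      = Nat.multinomial Finset.univ c := by
  have hpoly : ∑ j' : Fin n → Fin d, MvPolynomial.C (1 : ℂ) *
        ∏ r, (MvPolynomial.X r : MvPolynomial (Fin d) ℂ) ^ cnt j' r
      = ∑ β ∈ Finset.piAntidiag (Finset.univ : Finset (Fin d)) n,
          MvPolynomial.C ((Nat.multinomial Finset.univ β : ℂ)) *
            ∏ r, (MvPolynomial.X r : MvPolynomial (Fin d) ℂ) ^ β r := by
    have l1 : ∀ j' : Fin n → Fin d,
        MvPolynomial.C (1 : ℂ) * ∏ r, (MvPolynomial.X r : MvPolynomial (Fin d) ℂ) ^ cnt j' r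
          = ∏ t, (MvPolynomial.X (j' t) : MvPolynomial (Fin d) ℂ) := by
      intro j'
      rw [_root_.map_one, one_mul, prod_cnt (fun r => (MvPolynomial.X r : MvPolynomial (Fin d) ℂ)) j']
    simp only [l1]
    rw [← Fintype.piFinset_univ, ← Finset.prod_univ_sum (fun _ => Finset.univ)
      (fun _ r => (MvPolynomial.X r : MvPolynomial (Fin d) ℂ))]
    rw [Finset.prod_const, Finset.card_univ, Fintype.card_fin]
    rw [Finset.sum_pow_eq_sum_piAntidiag Finset.univ
      (fun r => (MvPolynomial.X r : MvPolynomial (Fin d) ℂ)) n]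
    refine Finset.sum_congr rfl fun β _ => ?_
    rw [MvPolynomial.C_eq_coe_nat]
  have h2 := coeff_compare Finset.univ (Finset.piAntidiag (Finset.univ : Finset (Fin d)) n)
    (fun _ => (1 : ℂ)) (fun j' => cnt j') (fun β => (Nat.multinomial Finset.univ β : ℂ))
    (fun β => β) hpoly c
  have hcmem : c ∈ Finset.piAntidiag (Finset.univ : Finset (Fin d)) n := by
    simp [Finset.mem_piAntidiag, hc]
  rw [Finset.sum_const, Finset.filter_eq', if_pos hcmem, Finset.sum_singleton] at h2
  have : ((Finset.univ.filter fun j' : Fin n → Fin d => cnt j' = c).card : ℂ)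
      = (Nat.multinomial Finset.univ c : ℂ) := by simpa using h2
  exact_mod_cast this

lemma genfun_eq {n d : ℕ} (M : Matrix (Fin d) (Fin d) ℂ) (k : Fin d → ℕ)
    (j : Fin n → Fin d) (hj : cnt j = k) :
    ∑ j' : Fin n → Fin d, MvPolynomial.C (∏ t, M (j t) (j' t)) *
        ∏ r, (MvPolynomial.X r : MvPolynomial (Fin d) ℂ) ^ cnt j' r
      = ∑ α ∈ Fintype.piFinset (fun m => Finset.Nat.antidiagonalTuple d (k m)),
          MvPolynomial.C (∏ m, (Nat.multinomial Finset.univ (α m) : ℂ) * ∏ r, M m r ^ α m r) *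
            ∏ r, (MvPolynomial.X r : MvPolynomial (Fin d) ℂ) ^ (∑ m, α m r) := by
  have l1 : ∀ j' : Fin n → Fin d,
      MvPolynomial.C (∏ t, M (j t) (j' t)) *
          ∏ r, (MvPolynomial.X r : MvPolynomial (Fin d) ℂ) ^ cnt j' r
        = ∏ t, (MvPolynomial.C (M (j t) (j' t)) * MvPolynomial.X (j' t)) := by
    intro j'
    rw [map_prod, ← prod_cnt (fun r => (MvPolynomial.X r : MvPolynomial (Fin d) ℂ)) j',
      Finset.prod_mul_distrib]
  simp only [l1]
  rw [← Fintype.piFinset_univ, ← Finset.prod_univ_sum (fun _ => Finset.univ)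
    (fun t r => MvPolynomial.C (M (j t) r) * MvPolynomial.X r)]
  rw [prod_cnt (fun m => ∑ r, MvPolynomial.C (M m r) * (MvPolynomial.X r : MvPolynomial (Fin d) ℂ)) j, hj]
  have l2 : ∀ m : Fin d,
      (∑ r, MvPolynomial.C (M m r) * (MvPolynomial.X r : MvPolynomial (Fin d) ℂ)) ^ k m
        = ∑ β ∈ Finset.Nat.antidiagonalTuple d (k m),
            MvPolynomial.C ((Nat.multinomial Finset.univ β : ℂ) * ∏ r, M m r ^ β r) *
              ∏ r, (MvPolynomial.X r : MvPolynomial (Fin d) ℂ) ^ β r := by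
    intro m
    rw [antidiag_eq, Finset.sum_pow_eq_sum_piAntidiag Finset.univ
      (fun r => MvPolynomial.C (M m r) * (MvPolynomial.X r : MvPolynomial (Fin d) ℂ)) (k m)]
    refine Finset.sum_congr rfl fun β _ => ?_
    simp only [mul_pow, Finset.prod_mul_distrib, _root_.map_mul, map_prod, _root_.map_pow,
      MvPolynomial.C_eq_coe_nat]
    ring
  simp only [l2]
  rw [Finset.prod_univ_sum]
  refine Finset.sum_congr rfl fun α _ => ?_
  rw [Finset.prod_mul_distrib, ← map_prod]
  congr 1
  rw [Finset.prod_comm]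
  exact Finset.prod_congr rfl fun r _ => Finset.prod_pow_eq_pow_sum Finset.univ (fun m => α m r) _

set_option maxHeartbeats 1000000 in
lemma core_sum {n d : ℕ} (M : Matrix (Fin d) (Fin d) ℂ) (k : Fin d → ℕ)
    (j : Fin n → Fin d) (hj : cnt j = k) (c : Fin d → ℕ) :
    ∑ j' ∈ Finset.univ.filter (fun j' : Fin n → Fin d => cnt j' = c), ∏ t, M (j t) (j' t)
      = ∑ α ∈ (Fintype.piFinset (fun m => Finset.Nat.antidiagonalTuple d (k m))).filter
          (fun α => (fun r => ∑ m, α m r) = c),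
          ∏ m, (Nat.multinomial Finset.univ (α m) : ℂ) * ∏ r, M m r ^ α m r := by
  have h2 := congrArg (MvPolynomial.coeff (Finsupp.equivFunOnFinite.symm c)) (genfun_eq M k j hj)
  simp only [mono_eq, MvPolynomial.coeff_sum, MvPolynomial.coeff_monomial,
    EmbeddingLike.apply_eq_iff_eq] at h2
  rw [Finset.sum_filter, Finset.sum_filter]
  exact h2

lemma scalar_real (a b A B N : ℕ) (h1 : A * a = N) (h2 : B * b = N) (hN : 0 < N) :
    (a : ℝ) * (Real.sqrt a)⁻¹ * (Real.sqrt b)⁻¹ = (Real.sqrt A)⁻¹ * Real.sqrt B := by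
  have ha : 0 < a := Nat.pos_of_ne_zero fun h => by subst h; simp at h1; omega
  have hb : 0 < b := Nat.pos_of_ne_zero fun h => by subst h; simp at h2; omega
  have hA : 0 < A := Nat.pos_of_ne_zero fun h => by subst h; simp at h1; omega
  have hB : 0 < B := Nat.pos_of_ne_zero fun h => by subst h; simp at h2; omega
  have sa : (0:ℝ) < Real.sqrt a := Real.sqrt_pos.mpr (by exact_mod_cast ha)
  have sb : (0:ℝ) < Real.sqrt b := Real.sqrt_pos.mpr (by exact_mod_cast hb)
  have sA : (0:ℝ) < Real.sqrt A := Real.sqrt_pos.mpr (by exact_mod_cast hA)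
  have sB : (0:ℝ) < Real.sqrt B := Real.sqrt_pos.mpr (by exact_mod_cast hB)
  have key : Real.sqrt A * Real.sqrt a = Real.sqrt B * Real.sqrt b := by
    rw [← Real.sqrt_mul (by positivity), ← Real.sqrt_mul (by positivity)]
    congr 1
    exact_mod_cast congrArg (Nat.cast : ℕ → ℝ) (h1.trans h2.symm)
  have haa : (a : ℝ) = Real.sqrt a * Real.sqrt a :=
    (Real.mul_self_sqrt (Nat.cast_nonneg a)).symm
  rw [haa, Real.sqrt_mul_self sa.le]
  field_simp
  nlinarith [key, sa, sb, sA, sB]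

lemma scalar_c (a b A B N : ℕ) (h1 : A * a = N) (h2 : B * b = N) (hN : 0 < N) :
    (a : ℂ) * (((Real.sqrt a : ℝ) : ℂ)⁻¹ * ((Real.sqrt b : ℝ) : ℂ)⁻¹)
      = ((Real.sqrt A : ℝ) : ℂ)⁻¹ * ((Real.sqrt B : ℝ) : ℂ) := by
  have h := scalar_real a b A B N h1 h2 hN
  rw [show ((a:ℂ)) = ((a:ℝ):ℂ) by norm_cast, ← Complex.ofReal_inv, ← Complex.ofReal_inv,
    ← Complex.ofReal_inv, ← Complex.ofReal_mul, ← Complex.ofReal_mul, ← Complex.ofReal_mul]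
  rw [mul_assoc] at h
  exact congrArg _ h


set_option maxHeartbeats 1000000 in
/-- Main theorem: explicit formula for the action of the `n`-fold symmetric
Kronecker product `S_n(M)` in terms of the rows of `M`, multinomial
coefficients, and square roots of factorials. -/
theorem symKron_action (d n : ℕ) (M : Matrix (Fin d) (Fin d) ℂ)
    (y : (Fin d → ℕ) → ℂ) (k : Fin d → ℕ) (hk : k ∈ Finset.Nat.antidiagonalTuple d n) :
    (symKron d n M).mulVec (fun i => y i.1) ⟨k, hk⟩ =
      ((Real.sqrt ((∏ m, Nat.factorial (k m) : ℕ)) : ℝ) : ℂ)⁻¹ *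
        ∑ α ∈ Fintype.piFinset (fun m => Finset.Nat.antidiagonalTuple d (k m)),
          (∏ m, (Nat.multinomial Finset.univ (α m) : ℂ) * ∏ r, M m r ^ α m r) *
            (((Real.sqrt ((∏ r, Nat.factorial (∑ m, α m r) : ℕ)) : ℝ) : ℂ) *
              y (fun r => ∑ m, α m r)) := by
  classical
  have hksum : ∑ m, k m = n := Finset.Nat.mem_antidiagonalTuple.mp hk
  have cntsum : ∀ j' : Fin n → Fin d, ∑ r, cnt j' r = n := by
    intro j'
    have := Finset.card_eq_sum_card_fiberwise
      (f := j') (s := Finset.univ) (t := Finset.univ) (fun x _ => Finset.mem_univ _)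
    simpa [cnt, Finset.card_univ] using this.symm
  have cntmem : ∀ j' : Fin n → Fin d, cnt j' ∈ Finset.Nat.antidiagonalTuple d n := fun j' =>
    Finset.Nat.mem_antidiagonalTuple.mpr (cntsum j')
  -- notation
  set Nc : (Fin d → ℕ) → ℕ :=
    fun c => (Finset.univ.filter fun j' : Fin n → Fin d => cnt j' = c).card with hNc
  set g : (Fin d → ℕ) → ℂ := fun c => ((Real.sqrt (Nc c) : ℝ) : ℂ)⁻¹ * y c with hg
  set W : (Fin d → Fin d → ℕ) → ℂ :=
    fun α => ∏ m, (Nat.multinomial Finset.univ (α m) : ℂ) * ∏ r, M m r ^ α m r with hW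
  -- b-sum evaluation
  have bsum : ∀ j' : Fin n → Fin d,
      ∑ b : ↥(Finset.Nat.antidiagonalTuple d n), star (pvec d n b.1 j') * y b.1
        = g (cnt j') := by
    intro j'
    rw [Finset.sum_coe_sort _ (fun c => star (pvec d n c j') * y c)]
    rw [Finset.sum_eq_single (cnt j')]
    · rw [pvec, if_pos rfl]
      simp [hg, hNc, Complex.star_def, map_inv₀, Complex.conj_ofReal]
    · intro c _ hne
      rw [pvec, if_neg (fun h : cnt j' = c => hne h.symm)]
      simp
    · intro h
      exact absurd (cntmem j') h
  -- unfold matrix products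
  have e1 : (symKron d n M).mulVec (fun i => y i.1) ⟨k, hk⟩
      = ∑ j : Fin n → Fin d, pvec d n k j *
          ∑ j' : Fin n → Fin d, (∏ t, M (j t) (j' t)) * g (cnt j') := by
    simp only [symKron, Matrix.mulVec, dotProduct, Matrix.mul_apply,
      Matrix.conjTranspose_apply, Pmat, kronPow, Matrix.of_apply]
    calc
      ∑ b : ↥(Finset.Nat.antidiagonalTuple d n),
          (∑ j' : Fin n → Fin d, (∑ j : Fin n → Fin d, pvec d n k j * ∏ t, M (j t) (j' t)) *
            star (pvec d n b.1 j')) * y b.1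
        = ∑ j' : Fin n → Fin d, ∑ j : Fin n → Fin d,
            ∑ b : ↥(Finset.Nat.antidiagonalTuple d n),
              pvec d n k j * ((∏ t, M (j t) (j' t)) * (star (pvec d n b.1 j') * y b.1)) := by
          simp only [Finset.sum_mul]
          rw [Finset.sum_comm]
          refine Finset.sum_congr rfl fun j' _ => ?_
          rw [Finset.sum_comm]
          exact Finset.sum_congr rfl fun j _ => Finset.sum_congr rfl fun b _ => by ring
      _ = ∑ j : Fin n → Fin d, pvec d n k j *
            ∑ j' : Fin n → Fin d, (∏ t, M (j t) (j' t)) * g (cnt j') := by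
          rw [Finset.sum_comm]
          refine Finset.sum_congr rfl fun j _ => ?_
          rw [Finset.mul_sum]
          refine Finset.sum_congr rfl fun j' _ => ?_
          rw [← bsum j', Finset.mul_sum, Finset.mul_sum]
  rw [e1]
  -- filter the outer sum
  have e2 : ∑ j : Fin n → Fin d, pvec d n k j *
        ∑ j' : Fin n → Fin d, (∏ t, M (j t) (j' t)) * g (cnt j')
      = ∑ j ∈ Finset.univ.filter (fun j : Fin n → Fin d => cnt j = k),
          ((Real.sqrt (Nc k) : ℝ) : ℂ)⁻¹ *
            ∑ j' : Fin n → Fin d, (∏ t, M (j t) (j' t)) * g (cnt j') := by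
    rw [Finset.sum_filter]
    refine Finset.sum_congr rfl fun j _ => ?_
    rw [pvec]
    split_ifs <;> simp [hNc]
  rw [e2]
  -- σ maps piFinset into antidiagonalTuple d n
  have σsum : ∀ α ∈ Fintype.piFinset (fun m => Finset.Nat.antidiagonalTuple d (k m)),
      ∑ r, (fun r => ∑ m, α m r) r = n := by
    intro α hα
    have hrow : ∀ m, ∑ r, α m r = k m := fun m =>
      Finset.Nat.mem_antidiagonalTuple.mp (Fintype.mem_piFinset.mp hα m)
    calc ∑ r, ∑ m, α m r = ∑ m, ∑ r, α m r := Finset.sum_comm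
      _ = ∑ m, k m := Finset.sum_congr rfl fun m _ => hrow m
      _ = n := hksum
  -- inner sum evaluation for fixed j with cnt j = k
  have e3 : ∀ j ∈ Finset.univ.filter (fun j : Fin n → Fin d => cnt j = k),
      ∑ j' : Fin n → Fin d, (∏ t, M (j t) (j' t)) * g (cnt j')
        = ∑ α ∈ Fintype.piFinset (fun m => Finset.Nat.antidiagonalTuple d (k m)),
            W α * g (fun r => ∑ m, α m r) := by
    intro j hj
    have hjk : cnt j = k := (Finset.mem_filter.mp hj).2
    rw [← Finset.sum_fiberwise_of_maps_to (fun j' _ => cntmem j')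
      (fun j' => (∏ t, M (j t) (j' t)) * g (cnt j'))]
    rw [← Finset.sum_fiberwise_of_maps_to
      (g := fun α : Fin d → Fin d → ℕ => (fun r => ∑ m, α m r))
      (t := Finset.Nat.antidiagonalTuple d n)
      (fun α hα => Finset.Nat.mem_antidiagonalTuple.mpr (σsum α hα))
      (fun α => W α * g (fun r => ∑ m, α m r))]
    refine Finset.sum_congr rfl fun c _ => ?_
    calc
      ∑ j' ∈ Finset.univ.filter (fun j' : Fin n → Fin d => cnt j' = c),
          (∏ t, M (j t) (j' t)) * g (cnt j')
        = (∑ j' ∈ Finset.univ.filter (fun j' : Fin n → Fin d => cnt j' = c),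
            ∏ t, M (j t) (j' t)) * g c := by
          rw [Finset.sum_mul]
          exact Finset.sum_congr rfl fun j' hj' => by
            rw [(Finset.mem_filter.mp hj').2]
      _ = (∑ α ∈ (Fintype.piFinset (fun m => Finset.Nat.antidiagonalTuple d (k m))).filter
            (fun α => (fun r => ∑ m, α m r) = c), W α) * g c := by
          rw [core_sum M k j hjk c]
      _ = ∑ α ∈ (Fintype.piFinset (fun m => Finset.Nat.antidiagonalTuple d (k m))).filter
            (fun α => (fun r => ∑ m, α m r) = c), W α * g (fun r => ∑ m, α m r) := by
          rw [Finset.sum_mul]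
          exact Finset.sum_congr rfl fun α hα => by
            rw [(Finset.mem_filter.mp hα).2]
  have e3' : ∀ j ∈ Finset.univ.filter (fun j : Fin n → Fin d => cnt j = k),
      ((Real.sqrt (Nc k) : ℝ) : ℂ)⁻¹ *
          ∑ j' : Fin n → Fin d, (∏ t, M (j t) (j' t)) * g (cnt j')
        = ((Real.sqrt (Nc k) : ℝ) : ℂ)⁻¹ *
          ∑ α ∈ Fintype.piFinset (fun m => Finset.Nat.antidiagonalTuple d (k m)),
            W α * g (fun r => ∑ m, α m r) := fun j hj => by rw [e3 j hj]
  rw [Finset.sum_congr rfl e3', Finset.sum_const, nsmul_eq_mul]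
  -- final scalar bookkeeping
  have hNk : Nc k = Nat.multinomial Finset.univ k := count_eq k hksum
  have hcard : (Finset.univ.filter (fun j : Fin n → Fin d => cnt j = k)).card
      = Nat.multinomial Finset.univ k := count_eq k hksum
  rw [hcard, hNk, Finset.mul_sum, Finset.mul_sum, Finset.mul_sum]
  refine Finset.sum_congr rfl fun α hα => ?_
  simp only [hg, hW]
  have hσ : ∑ r, (fun r => ∑ m, α m r) r = n := σsum α hα
  have hNσ : Nc (fun r => ∑ m, α m r) = Nat.multinomial Finset.univ (fun r => ∑ m, α m r) :=
    count_eq _ hσ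
  have h1 : (∏ m, Nat.factorial (k m)) * Nat.multinomial Finset.univ k = Nat.factorial n := by
    have := Nat.multinomial_spec Finset.univ k
    rwa [hksum] at this
  have h2 : (∏ r, Nat.factorial (∑ m, α m r)) *
      Nat.multinomial Finset.univ (fun r => ∑ m, α m r) = Nat.factorial n := by
    have := Nat.multinomial_spec Finset.univ (fun r => ∑ m, α m r)
    rwa [hσ] at this
  have hs := scalar_c (Nat.multinomial Finset.univ k)
    (Nat.multinomial Finset.univ (fun r => ∑ m, α m r))
    (∏ m, Nat.factorial (k m)) (∏ r, Nat.factorial (∑ m, α m r))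
    (Nat.factorial n) h1 h2 (Nat.factorial_pos n)
  rw [hNσ]
  linear_combination hs * ((∏ m, (Nat.multinomial Finset.univ (α m) : ℂ) * ∏ r, M m r ^ α m r) *
    y (fun r => ∑ m, α m r))
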